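/- Let q be a prime power and let v ≥ 1 and 2 ≤ d ≤ v be integers such that ⌈d/2⌉ divides v. Then A_q(v,d) ≤ Σ_{i=⌈d/2⌉}^{v−⌈d/2⌉} A_q(v, 2⌈d/2⌉; i). -/

import Mathlib

open scoped Classical

/-- The subspace distance `d_S(X,Y) = dim(X+Y) - dim(X∩Y)` between two subspaces. -/
noncomputable def subspaceDist {F V : Type*} [Field F] [AddCommGroup V] [Module F V]
    (X Y : Submodule F V) : ℕ :=
  Module.finrank F ↥(X ⊔ Y) - Module.finrank F ↥(X ⊓ Y)

/-- `C` is a subspace code with minimum subspace distance at least `d`. -/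
def IsSubspaceCode {F V : Type*} [Field F] [AddCommGroup V] [Module F V]
    (d : ℕ) (C : Finset (Submodule F V)) : Prop :=
  ∀ X ∈ C, ∀ Y ∈ C, X ≠ Y → d ≤ subspaceDist X Y

/-- `A_q(v,d)`: the maximum cardinality of a subspace code in `F^v` (where `#F = q`)
with minimum subspace distance at least `d`. -/
noncomputable def maxCode (F : Type*) [Field F] [Fintype F] (v d : ℕ) : ℕ :=
  sSup {n | ∃ C : Finset (Submodule F (Fin v → F)), IsSubspaceCode d C ∧ C.card = n}

/-- `A_q(v,d;k)`: the maximum cardinality of a constant dimension code in `F^v`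
(where `#F = q`) with minimum subspace distance at least `d` and all codewords of
dimension `k`. -/
noncomputable def maxCodeDim (F : Type*) [Field F] [Fintype F] (v d k : ℕ) : ℕ :=
  sSup {n | ∃ C : Finset (Submodule F (Fin v → F)), IsSubspaceCode d C ∧
    (∀ X ∈ C, Module.finrank F ↥X = k) ∧ C.card = n}

/-- `[x]_q = (q^x - 1)/(q - 1)`, the number of points of `PG(F_q^x)`. -/
def gaussNum (q x : ℕ) : ℕ := ∑ i ∈ Finset.range x, q ^ i

namespace SJ

open Module Submodule Finset

variable {F : Type*} [Field F] [Fintype F] {v : ℕ}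

lemma bddAbove' (S : Set ℕ)
    (h : ∀ n ∈ S, ∃ C : Finset (Submodule F (Fin v → F)), C.card = n) : BddAbove S := by
  have : Finite (Submodule F (Fin v → F)) :=
    Finite.of_injective (fun X => (X : Set (Fin v → F))) SetLike.coe_injective
  cases nonempty_fintype (Submodule F (Fin v → F))
  refine ⟨Fintype.card (Submodule F (Fin v → F)), fun n hn => ?_⟩
  obtain ⟨C, rfl⟩ := h n hn
  exact Finset.card_le_univ C

lemma le_maxCodeDim {d k : ℕ} (C : Finset (Submodule F (Fin v → F)))
    (h1 : IsSubspaceCode d C) (h2 : ∀ X ∈ C, Module.finrank F ↥X = k) :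
    C.card ≤ maxCodeDim F v d k :=
  le_csSup (bddAbove' _ (by rintro n ⟨C, -, -, rfl⟩; exact ⟨C, rfl⟩)) ⟨C, h1, h2, rfl⟩

lemma maxCode_le {d m : ℕ}
    (h : ∀ C : Finset (Submodule F (Fin v → F)), IsSubspaceCode d C → C.card ≤ m) :
    maxCode F v d ≤ m := by
  refine csSup_le ⟨0, ∅, fun X hX => absurd hX (Finset.notMem_empty X), rfl⟩ ?_
  rintro n ⟨C, hC, rfl⟩
  exact h C hC

lemma supinf (X Y : Submodule F (Fin v → F)) :
    finrank F ↥(X ⊔ Y) + finrank F ↥(X ⊓ Y) = finrank F ↥X + finrank F ↥Y :=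
  Submodule.finrank_sup_add_finrank_inf_eq X Y

lemma rank_le (X : Submodule F (Fin v → F)) : finrank F ↥X ≤ v := by
  have := Submodule.finrank_le X
  rwa [Module.finrank_pi, Fintype.card_fin] at this

lemma suple (X Y : Submodule F (Fin v → F)) : finrank F ↥(X ⊔ Y) ≤ v := rank_le _

lemma dist_def (X Y : Submodule F (Fin v → F)) :
    subspaceDist X Y = finrank F ↥(X ⊔ Y) - finrank F ↥(X ⊓ Y) := rfl

/-! ### counting -/

noncomputable def nzf (X : Submodule F (Fin v → F)) : Finset (Fin v → F) :=
  (Set.toFinset (X : Set (Fin v → F))).erase 0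

lemma mem_nzf {X : Submodule F (Fin v → F)} {x : Fin v → F} :
    x ∈ nzf X ↔ x ∈ X ∧ x ≠ 0 := by
  simp only [nzf, Finset.mem_erase, Set.mem_toFinset, SetLike.mem_coe, and_comm]

lemma card_nzf (X : Submodule F (Fin v → F)) :
    (nzf X).card = Fintype.card F ^ (finrank F ↥X) - 1 := by
  have hz : (0 : Fin v → F) ∈ Set.toFinset (X : Set (Fin v → F)) := by
    simp only [Set.mem_toFinset, SetLike.mem_coe]; exact X.zero_mem
  rw [nzf, Finset.card_erase_of_mem hz, Set.toFinset_card]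
  congr 1
  rw [show Fintype.card ↥(X : Set (Fin v → F)) = Fintype.card ↥X from
    Fintype.card_congr (Equiv.subtypeEquivRight (fun x => Iff.rfl))]
  exact card_eq_pow_finrank (K := F) (V := ↥X)

lemma nzf_disj {X Y : Submodule F (Fin v → F)} (h : X ⊓ Y = ⊥) :
    Disjoint (nzf X) (nzf Y) := by
  rw [Finset.disjoint_left]
  intro a haX haY
  rw [mem_nzf] at haX haY
  have : a ∈ X ⊓ Y := ⟨haX.1, haY.1⟩
  rw [h, Submodule.mem_bot] at this
  exact haX.2 this

lemma card_univ_fun : Fintype.card (Fin v → F) = Fintype.card F ^ v := by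
  simp [Fintype.card_fun]

lemma count_le (S : Finset (Submodule F (Fin v → F)))
    (hd : ∀ X ∈ S, ∀ Y ∈ S, X ≠ Y → X ⊓ Y = ⊥) :
    ∑ X ∈ S, (Fintype.card F ^ (finrank F ↥X) - 1) ≤ Fintype.card F ^ v - 1 := by
  have h1 : ∑ X ∈ S, (Fintype.card F ^ (finrank F ↥X) - 1) = ∑ X ∈ S, (nzf X).card :=
    Finset.sum_congr rfl (fun X _ => (card_nzf X).symm)
  rw [h1, ← Finset.card_biUnion (fun X hX Y hY hne => nzf_disj (hd X hX Y hY hne))]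
  calc (S.biUnion nzf).card ≤ ((Finset.univ : Finset (Fin v → F)).erase 0).card := by
        apply Finset.card_le_card
        intro a ha
        rw [Finset.mem_biUnion] at ha
        obtain ⟨X, -, haX⟩ := ha
        exact Finset.mem_erase.2 ⟨(mem_nzf.1 haX).2, Finset.mem_univ a⟩
    _ = Fintype.card F ^ v - 1 := by
        rw [Finset.card_erase_of_mem (Finset.mem_univ _), Finset.card_univ, card_univ_fun]

lemma count_eq (S : Finset (Submodule F (Fin v → F)))
    (hd : ∀ X ∈ S, ∀ Y ∈ S, X ≠ Y → X ⊓ Y = ⊥)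
    (hcov : ∀ x : Fin v → F, x ≠ 0 → ∃ X ∈ S, x ∈ X) :
    ∑ X ∈ S, (Fintype.card F ^ (finrank F ↥X) - 1) = Fintype.card F ^ v - 1 := by
  have h1 : ∑ X ∈ S, (Fintype.card F ^ (finrank F ↥X) - 1) = ∑ X ∈ S, (nzf X).card :=
    Finset.sum_congr rfl (fun X _ => (card_nzf X).symm)
  rw [h1, ← Finset.card_biUnion (fun X hX Y hY hne => nzf_disj (hd X hX Y hY hne))]
  have : S.biUnion nzf = (Finset.univ : Finset (Fin v → F)).erase 0 := by
    apply Finset.Subset.antisymm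
    · intro a ha
      rw [Finset.mem_biUnion] at ha
      obtain ⟨X, -, haX⟩ := ha
      exact Finset.mem_erase.2 ⟨(mem_nzf.1 haX).2, Finset.mem_univ a⟩
    · intro a ha
      obtain ⟨X, hXS, haX⟩ := hcov a (Finset.mem_erase.1 ha).1
      exact Finset.mem_biUnion.2 ⟨X, hXS, mem_nzf.2 ⟨haX, (Finset.mem_erase.1 ha).1⟩⟩
  rw [this, Finset.card_erase_of_mem (Finset.mem_univ _), Finset.card_univ, card_univ_fun]

/-! ### the duality map -/

noncomputable def sig (v : ℕ) (F : Type*) [Field F] [Fintype F] :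
    Submodule F (Fin v → F) → Submodule F (Fin v → F) :=
  fun X => X.dualAnnihilator.comap ((Pi.basisFun F (Fin v)).toDualEquiv.toLinearMap)

lemma sig_rank (X : Submodule F (Fin v → F)) :
    finrank F ↥(sig v F X) + finrank F ↥X = v := by
  have h1 : finrank F ↥(sig v F X) = finrank F ↥(X.dualAnnihilator) := by
    rw [sig, Submodule.comap_equiv_eq_map_symm]
    exact LinearEquiv.finrank_map_eq _ _
  have h2 : finrank F ↥(X.dualAnnihilator) = finrank F ((Fin v → F) ⧸ X) :=
    (Subspace.quotEquivAnnihilator X).symm.finrank_eq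
  have h3 := Submodule.finrank_quotient_add_finrank X
  rw [Module.finrank_pi, Fintype.card_fin] at h3
  rw [h1, h2]
  exact h3

lemma sig_sup (X Y : Submodule F (Fin v → F)) :
    sig v F (X ⊔ Y) = sig v F X ⊓ sig v F Y := by
  simp [sig, Submodule.dualAnnihilator_sup_eq, Submodule.comap_inf]

lemma sig_top : sig v F ⊤ = ⊥ := by
  simp [sig, Submodule.dualAnnihilator_top, Submodule.comap_bot]

lemma sig_inj : Function.Injective (sig v F) := by
  intro X Y h
  have hXY : sig v F (X ⊔ Y) = sig v F X := by
    rw [sig_sup, h, inf_idem, ← h]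
  have hYX : sig v F (X ⊔ Y) = sig v F Y := by
    rw [sig_sup, h, inf_idem]
  have r1 := sig_rank (F := F) (X ⊔ Y)
  have r2 := sig_rank (F := F) X
  have r3 := sig_rank (F := F) Y
  rw [hXY] at r1
  have e1 : finrank F ↥(X ⊔ Y) = finrank F ↥X := by omega
  have hX : X ⊔ Y = X :=
    (Submodule.eq_of_le_of_finrank_le le_sup_left e1.le).symm
  have r1' := sig_rank (F := F) (X ⊔ Y)
  rw [hYX] at r1'
  have e2 : finrank F ↥(X ⊔ Y) = finrank F ↥Y := by omega
  have hY : X ⊔ Y = Y :=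
    (Submodule.eq_of_le_of_finrank_le le_sup_right e2.le).symm
  rw [← hX, hY]

lemma sig_dist (X Y : Submodule F (Fin v → F)) :
    subspaceDist (sig v F X) (sig v F Y) = subspaceDist X Y := by
  have e1 := supinf X Y
  have e2 := supinf (sig v F X) (sig v F Y)
  have e3 := sig_rank (F := F) X
  have e4 := sig_rank (F := F) Y
  have e5 : finrank F ↥(sig v F X ⊓ sig v F Y) + finrank F ↥(X ⊔ Y) = v := by
    rw [← sig_sup]; exact sig_rank _
  have e6 := suple X Y
  have e7 := suple (sig v F X) (sig v F Y)
  simp only [dist_def]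
  omega

lemma sig_code {d : ℕ} (C : Finset (Submodule F (Fin v → F))) (h : IsSubspaceCode d C) :
    IsSubspaceCode d (C.image (sig v F)) := by
  intro X hX Y hY hne
  obtain ⟨X₀, hX₀, rfl⟩ := Finset.mem_image.1 hX
  obtain ⟨Y₀, hY₀, rfl⟩ := Finset.mem_image.1 hY
  rw [sig_dist]
  exact h X₀ hX₀ Y₀ hY₀ (fun hc => hne (by rw [hc]))

end SJ

namespace SJ

open Polynomial Module Submodule

lemma key_factor {R : Type*} [CommRing R] (m : ℕ) (hm : 1 ≤ m) :
    (X : R[X]) ^ m - X = X * (X ^ (m - 1) - 1) := by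
  have hmm : m - 1 + 1 = m := Nat.succ_pred_eq_of_pos hm
  rw [mul_sub, mul_one]
  congr 1
  rw [← hmm, Nat.add_sub_cancel, pow_succ, mul_comm]

lemma dvd_pow_sub (R : Type*) [CommRing R] (Q k : ℕ) (hQ : 2 ≤ Q) (hk : 1 ≤ k) :
    (X : R[X]) ^ Q - X ∣ (X : R[X]) ^ (Q ^ k) - X := by
  have hQk : 1 ≤ Q ^ k := Nat.one_le_pow _ _ (by omega)
  obtain ⟨c, hc⟩ : Q - 1 ∣ Q ^ k - 1 := by
    have := Nat.sub_dvd_pow_sub_pow Q 1 k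
    simpa using this
  have h1 : (X : R[X]) ^ (Q - 1) - 1 ∣ (X : R[X]) ^ (Q ^ k - 1) - 1 := by
    have : (X : R[X]) ^ (Q ^ k - 1) - 1 = ((X : R[X]) ^ (Q - 1)) ^ c - 1 ^ c := by
      rw [← pow_mul, ← hc, one_pow]
    rw [this]
    exact sub_dvd_pow_sub_pow _ _ _
  rw [key_factor Q (by omega), key_factor (Q ^ k) hQk]
  exact mul_dvd_mul_left _ h1

lemma exists_field_ext (F : Type*) [Field F] [Fintype F] (t : ℕ) (ht : 0 < t) :
    ∃ (K : Type) (_ : Field K) (_ : Finite K) (_ : Algebra F K),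
      Module.finrank F K = t := by
  obtain ⟨n, hp, hcard⟩ := FiniteField.card F (ringChar F)
  haveI hfact : Fact (Nat.Prime (ringChar F)) := ⟨hp⟩
  set p := ringChar F with hpdef
  haveI : Algebra (ZMod p) F := ZMod.algebra _ _
  let e1 : F ≃ₐ[ZMod p] GaloisField p n :=
    GaloisField.algEquivGaloisFieldOfFintype p n hcard
  have hne : (X ^ p ^ (n * t) - X : (ZMod p)[X]) ≠ 0 :=
    FiniteField.X_pow_card_pow_sub_X_ne_zero _ (by positivity) hp.one_lt
  have hdvd : (X ^ p ^ (n : ℕ) - X : (ZMod p)[X]) ∣ (X ^ p ^ (n * t) - X) := by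
    have h2 : (p : ℕ) ^ ((n : ℕ) * t) = ((p : ℕ) ^ (n : ℕ)) ^ t := by rw [pow_mul]
    rw [h2]
    exact dvd_pow_sub _ _ _ (Nat.one_lt_pow n.ne_zero hp.one_lt) ht
  have hsplits : Polynomial.Splits ((X ^ p ^ (n : ℕ) - X : (ZMod p)[X]).map
      (algebraMap (ZMod p) (GaloisField p (n * t)))) :=
    Polynomial.Splits.of_dvd (Polynomial.SplittingField.splits _) (Polynomial.map_ne_zero hne)
      (Polynomial.map_dvd _ hdvd)
  let e2 : GaloisField p n →ₐ[ZMod p] GaloisField p (n * t) :=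
    Polynomial.SplittingField.lift _ hsplits
  letI A : Algebra F (GaloisField p (n * t)) := ((e2.comp e1.toAlgHom).toRingHom).toAlgebra
  refine ⟨GaloisField p (n * t), inferInstance, inferInstance, A, ?_⟩
  haveI : Fintype (GaloisField p (n * t)) := Fintype.ofFinite _
  have hcardK : Fintype.card (GaloisField p (n * t)) = p ^ ((n : ℕ) * t) := by
    rw [← Nat.card_eq_fintype_card]
    exact GaloisField.card _ _ (Nat.mul_ne_zero n.pos.ne' (by omega))
  have h2 : Fintype.card (GaloisField p (n * t)) =
      Fintype.card F ^ (Module.finrank F (GaloisField p (n * t))) :=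
    card_eq_pow_finrank
  rw [hcard, ← pow_mul] at h2
  have h3 : (n : ℕ) * t = (n : ℕ) * Module.finrank F (GaloisField p (n * t)) :=
    Nat.pow_right_injective hp.two_le (hcardK.symm.trans h2)
  have := Nat.eq_of_mul_eq_mul_left n.pos h3
  omega

lemma exists_spread (F : Type*) [Field F] [Fintype F] (v t s : ℕ) (ht : 1 ≤ t)
    (hveq : v = t * s) :
    ∃ D : Finset (Submodule F (Fin v → F)), IsSubspaceCode (2 * t) D ∧
      (∀ X ∈ D, Module.finrank F ↥X = t) ∧
      D.card * (Fintype.card F ^ t - 1) = Fintype.card F ^ v - 1 := by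
  classical
  obtain ⟨K, _, _, _, hK⟩ := exists_field_ext F t ht
  haveI : Fintype K := Fintype.ofFinite K
  have hrkW : finrank F (Fin s → K) = v := by
    rw [Module.finrank_pi_fintype, Finset.sum_const, Finset.card_univ, Fintype.card_fin, hK,
      smul_eq_mul, hveq, mul_comm]
  have hrkV : finrank F (Fin v → F) = v := by rw [Module.finrank_pi, Fintype.card_fin]
  let φ : (Fin s → K) ≃ₗ[F] (Fin v → F) := LinearEquiv.ofFinrankEq _ _ (hrkW.trans hrkV.symm)
  let lineF : (Fin s → K) → Submodule F (Fin v → F) := fun x =>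
    (Submodule.restrictScalars F (K ∙ x)).map (φ : (Fin s → K) →ₗ[F] (Fin v → F))
  have hrs : ∀ p : Submodule K (Fin s → K),
      finrank F ↥(Submodule.restrictScalars F p) = t * finrank K ↥p := by
    intro p
    have e1 : finrank F ↥(Submodule.restrictScalars F p) = finrank F ↥p :=
      LinearEquiv.finrank_eq ((Submodule.restrictScalarsEquiv F K (Fin s → K) p).restrictScalars F)
    rw [e1, ← hK]
    exact (Module.finrank_mul_finrank F K ↥p).symm
  have hline_rank : ∀ x : Fin s → K, x ≠ 0 → finrank F ↥(lineF x) = t := by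
    intro x hx
    show finrank F ↥((Submodule.restrictScalars F (K ∙ x)).map
      (φ : (Fin s → K) →ₗ[F] (Fin v → F))) = t
    rw [LinearEquiv.finrank_map_eq, hrs, finrank_span_singleton hx, mul_one]
  have hline_mem : ∀ x : Fin s → K, φ x ∈ lineF x := by
    intro x
    exact Submodule.mem_map_of_mem
      ((Submodule.restrictScalars_mem F _ _).2 (Submodule.mem_span_singleton_self x))
  have hline_inf : ∀ x y : Fin s → K, x ≠ 0 → y ≠ 0 → lineF x ≠ lineF y →
      lineF x ⊓ lineF y = ⊥ := by
    intro x y hx hy hne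
    by_contra hbot
    obtain ⟨z, hz, hz0⟩ := (Submodule.ne_bot_iff _).1 hbot
    obtain ⟨w, hw, hwz⟩ := Submodule.mem_map.1 hz.1
    obtain ⟨w', hw', hwz'⟩ := Submodule.mem_map.1 hz.2
    have hww : w = w' := by
      apply φ.injective
      have h := hwz.trans hwz'.symm
      simpa using h
    subst hww
    have hw0 : w ≠ 0 := by
      intro h0; apply hz0; rw [← hwz, h0]; exact map_zero _
    rw [Submodule.restrictScalars_mem] at hw hw'
    have h1 : (K ∙ w) = (K ∙ x) := by
      apply Submodule.eq_of_le_of_finrank_le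
        ((Submodule.span_singleton_le_iff_mem w _).2 hw)
      rw [finrank_span_singleton hx, finrank_span_singleton hw0]
    have h2 : (K ∙ w) = (K ∙ y) := by
      apply Submodule.eq_of_le_of_finrank_le
        ((Submodule.span_singleton_le_iff_mem w _).2 hw')
      rw [finrank_span_singleton hy, finrank_span_singleton hw0]
    apply hne
    show (Submodule.restrictScalars F (K ∙ x)).map (φ : (Fin s → K) →ₗ[F] (Fin v → F)) =
      (Submodule.restrictScalars F (K ∙ y)).map (φ : (Fin s → K) →ₗ[F] (Fin v → F))
    rw [← h1, h2]
  let D : Finset (Submodule F (Fin v → F)) :=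
    ((Finset.univ : Finset (Fin s → K)).erase 0).image lineF
  have hmemD : ∀ X ∈ D, ∃ x : Fin s → K, x ≠ 0 ∧ X = lineF x := by
    intro X hX
    obtain ⟨x, hx, rfl⟩ := Finset.mem_image.1 hX
    exact ⟨x, (Finset.mem_erase.1 hx).1, rfl⟩
  have hdisj : ∀ X ∈ D, ∀ Y ∈ D, X ≠ Y → X ⊓ Y = ⊥ := by
    intro X hX Y hY hne
    obtain ⟨x, hx, rfl⟩ := hmemD X hX
    obtain ⟨y, hy, rfl⟩ := hmemD Y hY
    exact hline_inf x y hx hy hne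
  have hdims : ∀ X ∈ D, finrank F ↥X = t := by
    intro X hX
    obtain ⟨x, hx, rfl⟩ := hmemD X hX
    exact hline_rank x hx
  refine ⟨D, ?_, hdims, ?_⟩
  · intro X hX Y hY hne
    have hinf := hdisj X hX Y hY hne
    have h1 := supinf X Y
    have h2 := hdims X hX
    have h3 := hdims Y hY
    have hb : finrank F ↥(⊥ : Submodule F (Fin v → F)) = 0 := finrank_bot F _
    rw [hinf, hb, h2, h3] at h1
    rw [dist_def, hinf, hb]
    omega
  · have hcov : ∀ z : Fin v → F, z ≠ 0 → ∃ X ∈ D, z ∈ X := by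
      intro z hz
      refine ⟨lineF (φ.symm z), Finset.mem_image_of_mem _
        (Finset.mem_erase.2 ⟨?_, Finset.mem_univ _⟩), ?_⟩
      · exact (LinearEquiv.map_ne_zero_iff φ.symm).2 hz
      · have := hline_mem (φ.symm z)
        rwa [LinearEquiv.apply_symm_apply] at this
    have hce := count_eq D hdisj hcov
    rw [Finset.sum_congr rfl (fun X hX => by rw [hdims X hX])] at hce
    rwa [Finset.sum_const, smul_eq_mul] at hce

section Main

variable {F : Type*} [Field F] [Fintype F] {v d t N : ℕ}

lemma fiber_le (hdt1 : 2 * t ≤ d + 1) (C : Finset (Submodule F (Fin v → F)))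
    (hC : IsSubspaceCode d C) (i : ℕ) :
    (C.filter (fun X : Submodule F (Fin v → F) => finrank F ↥X = i)).card ≤ maxCodeDim F v (2 * t) i := by
  classical
  apply le_maxCodeDim
  · intro X hX Y hY hne
    rw [Finset.mem_filter] at hX hY
    have h1 := supinf X Y
    have h2 := hC X hX.1 Y hY.1 hne
    rw [dist_def] at h2
    rw [dist_def]
    have := hX.2
    have := hY.2
    omega
  · intro X hX
    exact (Finset.mem_filter.1 hX).2

lemma small_card_le_one (hdt1 : 2 * t ≤ d + 1) (C : Finset (Submodule F (Fin v → F)))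
    (hC : IsSubspaceCode d C) (hd2 : 2 ≤ d) :
    (C.filter (fun X : Submodule F (Fin v → F) => finrank F ↥X < t)).card ≤ 1 := by
  classical
  rw [Finset.card_le_one]
  intro X hX Y hY
  by_contra hne
  rw [Finset.mem_filter] at hX hY
  have h1 := supinf X Y
  have h2 := hC X hX.1 Y hY.1 hne
  rw [dist_def] at h2
  have h3 := hX.2
  have h4 := hY.2
  omega

lemma large_card_le_one (hdt1 : 2 * t ≤ d + 1) (htv : 2 * t ≤ v)
    (C : Finset (Submodule F (Fin v → F)))
    (hC : IsSubspaceCode d C) (hd2 : 2 ≤ d) :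
    (C.filter (fun X : Submodule F (Fin v → F) => v - t < finrank F ↥X)).card ≤ 1 := by
  classical
  rw [Finset.card_le_one]
  intro X hX Y hY
  by_contra hne
  rw [Finset.mem_filter] at hX hY
  have h1 := supinf X Y
  have h2 := hC X hX.1 Y hY.1 hne
  rw [dist_def] at h2
  have h3 := hX.2
  have h4 := hY.2
  have h5 := suple X Y
  have h6 := rank_le X
  have h7 := rank_le Y
  omega

lemma N_pos (hN : N * (Fintype.card F ^ t - 1) = Fintype.card F ^ v - 1) (hv : 1 ≤ v) :
    1 ≤ N := by
  have hq : 1 < Fintype.card F := Fintype.one_lt_card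
  have hqv : 1 < Fintype.card F ^ v := Nat.one_lt_pow (by omega) hq
  rcases Nat.eq_zero_or_pos N with h | h
  · rw [h, zero_mul] at hN; omega
  · exact h

lemma small_side (hd2 : 2 ≤ d) (hdt1 : 2 * t ≤ d + 1) (hdt2 : d ≤ 2 * t) (htv : 2 * t ≤ v)
    (C : Finset (Submodule F (Fin v → F))) (hC : IsSubspaceCode d C)
    (hN : N * (Fintype.card F ^ t - 1) = Fintype.card F ^ v - 1)
    (hNA : N ≤ maxCodeDim F v (2 * t) t) :
    (C.filter (fun X : Submodule F (Fin v → F) => finrank F ↥X < t)).card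
      + (C.filter (fun X : Submodule F (Fin v → F) => finrank F ↥X = t)).card ≤ maxCodeDim F v (2 * t) t := by
  classical
  have hq : 2 ≤ Fintype.card F := Fintype.one_lt_card
  by_cases hsm : C.filter (fun X : Submodule F (Fin v → F) => finrank F ↥X < t) = ∅
  · rw [hsm]
    simpa using fiber_le hdt1 C hC t
  · obtain ⟨U, hUmem⟩ := Finset.nonempty_iff_ne_empty.2 hsm
    rw [Finset.mem_filter] at hUmem
    obtain ⟨hUC, hUlt⟩ := hUmem
    have hs1 := small_card_le_one hdt1 C hC hd2
    by_cases hct : C.filter (fun X : Submodule F (Fin v → F) => finrank F ↥X = t) = ∅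
    · have hN1 : 1 ≤ N := N_pos hN (by omega)
      rw [hct]
      simp only [Finset.card_empty, add_zero]
      omega
    · obtain ⟨W₀, hW₀mem⟩ := Finset.nonempty_iff_ne_empty.2 hct
      rw [Finset.mem_filter] at hW₀mem
      obtain ⟨hW₀C, hW₀t⟩ := hW₀mem
      -- dimension facts for U
      have hUW : ∀ W ∈ C, finrank F ↥W = t → U ⊓ W = ⊥ ∧ finrank F ↥U + 1 = t := by
        intro W hW hWt
        have hne : U ≠ W := by intro h; rw [h, hWt] at hUlt; omega
        have h1 := supinf U W
        have h2 := hC U hUC W hW hne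
        rw [dist_def] at h2
        constructor
        · have : finrank F ↥(U ⊓ W) = 0 := by omega
          exact (Submodule.finrank_eq_zero).1 this
        · omega
      have hUdim : finrank F ↥U + 1 = t := (hUW W₀ hW₀C hW₀t).2
      have ht2 : 2 ≤ t := by
        have h1 := supinf U W₀
        have h2 := hC U hUC W₀ hW₀C (by intro h; rw [h, hW₀t] at hUlt; omega)
        rw [dist_def] at h2
        omega
      -- the disjoint family
      set Ct := C.filter (fun X : Submodule F (Fin v → F) => finrank F ↥X = t) with hCt
      have hUnot : U ∉ Ct := by
        intro h; rw [hCt, Finset.mem_filter] at h; omega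
      have hdisj : ∀ X ∈ insert U Ct, ∀ Y ∈ insert U Ct, X ≠ Y → X ⊓ Y = ⊥ := by
        intro X hX Y hY hne
        rw [Finset.mem_insert] at hX hY
        rcases hX with rfl | hX <;> rcases hY with rfl | hY
        · exact absurd rfl hne
        · rw [hCt, Finset.mem_filter] at hY
          exact (hUW Y hY.1 hY.2).1
        · rw [hCt, Finset.mem_filter] at hX
          rw [inf_comm]
          exact (hUW X hX.1 hX.2).1
        · rw [hCt, Finset.mem_filter] at hX hY
          have h1 := supinf X Y
          have h2 := hC X hX.1 Y hY.1 hne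
          rw [dist_def] at h2
          have : finrank F ↥(X ⊓ Y) = 0 := by
            have := hX.2; have := hY.2; omega
          exact (Submodule.finrank_eq_zero).1 this
      have hcount := count_le (insert U Ct) hdisj
      rw [Finset.sum_insert hUnot] at hcount
      rw [Finset.sum_congr rfl (fun X hX => by
        rw [(Finset.mem_filter.1 hX).2])] at hcount
      rw [Finset.sum_const, smul_eq_mul] at hcount
      -- arithmetic
      have hplow : 2 ≤ Fintype.card F ^ (t - 1) := Nat.one_lt_pow (by omega) hq
      have hUrk : finrank F ↥U = t - 1 := by omega
      rw [hUrk] at hcount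
      have hqt : 1 ≤ Fintype.card F ^ t := Nat.one_le_pow _ _ (by omega)
      have hcN : Ct.card + 1 ≤ N := by
        by_contra hcon
        have hge : N ≤ Ct.card := by omega
        have := Nat.mul_le_mul_right (Fintype.card F ^ t - 1) hge
        omega
      have : (C.filter (fun X : Submodule F (Fin v → F) => finrank F ↥X < t)).card ≤ 1 := hs1
      omega

end Main

section Main2

variable {F : Type*} [Field F] [Fintype F] {v d t N : ℕ}

lemma large_side (hd2 : 2 ≤ d) (hdt1 : 2 * t ≤ d + 1) (hdt2 : d ≤ 2 * t) (htv : 2 * t ≤ v)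
    (ht1 : 1 ≤ t)
    (C : Finset (Submodule F (Fin v → F))) (hC : IsSubspaceCode d C)
    (hN : N * (Fintype.card F ^ t - 1) = Fintype.card F ^ v - 1)
    (hNA' : N ≤ maxCodeDim F v (2 * t) (v - t)) :
    (C.filter (fun X : Submodule F (Fin v → F) => finrank F ↥X = v - t)).card
      + (C.filter (fun X : Submodule F (Fin v → F) => v - t < finrank F ↥X)).card
      ≤ maxCodeDim F v (2 * t) (v - t) := by
  classical
  have hq : 2 ≤ Fintype.card F := Fintype.one_lt_card
  have hrkV : finrank F (Fin v → F) = v := by rw [Module.finrank_pi, Fintype.card_fin]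
  by_cases hlg : C.filter (fun X : Submodule F (Fin v → F) => v - t < finrank F ↥X) = ∅
  · rw [hlg]
    simpa using fiber_le hdt1 C hC (v - t)
  · obtain ⟨L, hLmem⟩ := Finset.nonempty_iff_ne_empty.2 hlg
    rw [Finset.mem_filter] at hLmem
    obtain ⟨hLC, hLgt⟩ := hLmem
    have hs2 := large_card_le_one hdt1 htv C hC hd2
    by_cases hct : C.filter (fun X : Submodule F (Fin v → F) => finrank F ↥X = v - t) = ∅
    · have hN1 : 1 ≤ N := N_pos hN (by omega)
      rw [hct]
      simp only [Finset.card_empty, zero_add]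
      omega
    · obtain ⟨X₀, hX₀mem⟩ := Finset.nonempty_iff_ne_empty.2 hct
      rw [Finset.mem_filter] at hX₀mem
      obtain ⟨hX₀C, hX₀t⟩ := hX₀mem
      have hLX : ∀ X ∈ C, finrank F ↥X = v - t → L ⊔ X = ⊤ ∧ finrank F ↥L = v - t + 1 := by
        intro X hX hXt
        have hne : L ≠ X := by intro h; rw [h, hXt] at hLgt; omega
        have h1 := supinf L X
        have h2 := hC L hLC X hX hne
        rw [dist_def] at h2
        have h5 := suple L X
        have h6 := rank_le L
        have hsup : finrank F ↥(L ⊔ X) = v := by omega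
        exact ⟨Submodule.eq_top_of_finrank_eq (by rw [hsup, hrkV]), by omega⟩
      have hLdim : finrank F ↥L = v - t + 1 := (hLX X₀ hX₀C hX₀t).2
      have ht2 : 2 ≤ t := by
        have h1 := supinf L X₀
        have h2 := hC L hLC X₀ hX₀C (by intro h; rw [h, hX₀t] at hLgt; omega)
        rw [dist_def] at h2
        have h5 := suple L X₀
        have h6 := rank_le L
        omega
      have hXY : ∀ X ∈ C, finrank F ↥X = v - t → ∀ Y ∈ C, finrank F ↥Y = v - t →
          X ≠ Y → X ⊔ Y = ⊤ := by
        intro X hX hXt Y hY hYt hne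
        have h1 := supinf X Y
        have h2 := hC X hX Y hY hne
        rw [dist_def] at h2
        have h5 := suple X Y
        have hsup : finrank F ↥(X ⊔ Y) = v := by omega
        exact Submodule.eq_top_of_finrank_eq (by rw [hsup, hrkV])
      set Ct := C.filter (fun X : Submodule F (Fin v → F) => finrank F ↥X = v - t) with hCtdef
      have hsigL : finrank F ↥(sig v F L) = t - 1 := by
        have := sig_rank (F := F) L
        rw [hLdim] at this
        omega
      have hnotmem : sig v F L ∉ Ct.image (sig v F) := by
        intro h
        obtain ⟨X, hXmem, heq⟩ := Finset.mem_image.1 h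
        have h1 := sig_rank (F := F) X
        have h2 := (Finset.mem_filter.1 hXmem).2
        rw [heq, hsigL] at h1
        omega
      have hdisj : ∀ A ∈ insert (sig v F L) (Ct.image (sig v F)),
          ∀ B ∈ insert (sig v F L) (Ct.image (sig v F)), A ≠ B → A ⊓ B = ⊥ := by
        intro A hA B hB hne
        rw [Finset.mem_insert] at hA hB
        rcases hA with rfl | hA <;> rcases hB with rfl | hB
        · exact absurd rfl hne
        · obtain ⟨X, hXmem, rfl⟩ := Finset.mem_image.1 hB
          rw [Finset.mem_filter] at hXmem
          rw [← sig_sup, (hLX X hXmem.1 hXmem.2).1]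
          exact sig_top
        · obtain ⟨X, hXmem, rfl⟩ := Finset.mem_image.1 hA
          rw [Finset.mem_filter] at hXmem
          rw [inf_comm, ← sig_sup, (hLX X hXmem.1 hXmem.2).1]
          exact sig_top
        · obtain ⟨X, hXmem, rfl⟩ := Finset.mem_image.1 hA
          obtain ⟨Y, hYmem, rfl⟩ := Finset.mem_image.1 hB
          rw [Finset.mem_filter] at hXmem hYmem
          have hXYne : X ≠ Y := fun h => hne (by rw [h])
          rw [← sig_sup, hXY X hXmem.1 hXmem.2 Y hYmem.1 hYmem.2 hXYne]
          exact sig_top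
      have hcount := count_le (insert (sig v F L) (Ct.image (sig v F))) hdisj
      rw [Finset.sum_insert hnotmem] at hcount
      rw [show (∑ x ∈ Ct.image (sig v F), (Fintype.card F ^ finrank F ↥x - 1))
          = ∑ _x ∈ Ct.image (sig v F), (Fintype.card F ^ t - 1) from
        Finset.sum_congr rfl (fun Z hZ => by
          obtain ⟨X, hXmem, rfl⟩ := Finset.mem_image.1 hZ
          have h1 := sig_rank (F := F) X
          have h2 := (Finset.mem_filter.1 hXmem).2
          have h3 : finrank F ↥(sig v F X) = t := by omega
          rw [h3])] at hcount
      rw [Finset.sum_const, smul_eq_mul, Finset.card_image_of_injective _ sig_inj,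
        hsigL] at hcount
      have hplow : 2 ≤ Fintype.card F ^ (t - 1) := Nat.one_lt_pow (by omega) hq
      have hqt : 1 ≤ Fintype.card F ^ t := Nat.one_le_pow _ _ (by omega)
      have hcN : Ct.card + 1 ≤ N := by
        by_contra hcon
        have hge : N ≤ Ct.card := by omega
        have := Nat.mul_le_mul_right (Fintype.card F ^ t - 1) hge
        omega
      have := hs2
      omega

end Main2

section Main3

variable {F : Type*} [Field F] [Fintype F] {v d t N : ℕ}

lemma nzf_inf (X Y : Submodule F (Fin v → F)) : nzf X ∩ nzf Y = nzf (X ⊓ Y) := by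
  ext a
  simp only [Finset.mem_inter, mem_nzf, Submodule.mem_inf]
  tauto

lemma Nval (hv2 : v = 2 * t) (ht1 : 1 ≤ t)
    (hN : N * (Fintype.card F ^ t - 1) = Fintype.card F ^ v - 1) :
    N = Fintype.card F ^ t + 1 := by
  have hq : 2 ≤ Fintype.card F := Fintype.one_lt_card
  have hb2 : 2 ≤ Fintype.card F ^ t := Nat.one_lt_pow (by omega) hq
  obtain ⟨b, hb⟩ : ∃ b, Fintype.card F ^ t = b + 1 := ⟨Fintype.card F ^ t - 1, by omega⟩
  have p1 : Fintype.card F ^ v = Fintype.card F ^ t * Fintype.card F ^ t := by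
    rw [hv2, two_mul, pow_add]
  have key : (Fintype.card F ^ t + 1) * (Fintype.card F ^ t - 1)
      = Fintype.card F ^ v - 1 := by
    rw [p1, hb, Nat.add_sub_cancel]
    have h2 : (b + 1) * (b + 1) = (b + 1 + 1) * b + 1 := by ring
    rw [h2, Nat.add_sub_cancel]
  exact Nat.eq_of_mul_eq_mul_right (by omega) (hN.trans key.symm)

set_option maxHeartbeats 1000000 in
lemma both_side (hd2 : 2 ≤ d) (hdt1 : 2 * t ≤ d + 1) (hdt2 : d ≤ 2 * t) (hv2 : v = 2 * t)
    (ht1 : 1 ≤ t)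
    (C : Finset (Submodule F (Fin v → F))) (hC : IsSubspaceCode d C)
    (hN : N * (Fintype.card F ^ t - 1) = Fintype.card F ^ v - 1)
    (hNA : N ≤ maxCodeDim F v (2 * t) t)
    (hNA' : N ≤ maxCodeDim F v (2 * t) (v - t)) :
    (C.filter (fun X : Submodule F (Fin v → F) => finrank F ↥X < t)).card
      + (C.filter (fun X : Submodule F (Fin v → F) => finrank F ↥X = t)).card
      + (C.filter (fun X : Submodule F (Fin v → F) => v - t < finrank F ↥X)).card
      ≤ maxCodeDim F v (2 * t) t := by
  classical
  have hq : 2 ≤ Fintype.card F := Fintype.one_lt_card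
  have htv : 2 * t ≤ v := by omega
  have hvt : v - t = t := by omega
  by_cases hsm : C.filter (fun X : Submodule F (Fin v → F) => finrank F ↥X < t) = ∅
  · rw [hsm]
    simp only [Finset.card_empty, zero_add]
    have hls := large_side hd2 hdt1 hdt2 htv ht1 C hC hN (by rw [hvt]; exact hNA)
    rw [hvt] at hls ⊢
    exact hls
  by_cases hlg : C.filter (fun X : Submodule F (Fin v → F) => v - t < finrank F ↥X) = ∅
  · rw [hlg]
    simp only [Finset.card_empty, add_zero]
    exact small_side hd2 hdt1 hdt2 htv C hC hN hNA
  obtain ⟨U, hUmem⟩ := Finset.nonempty_iff_ne_empty.2 hsm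
  rw [Finset.mem_filter] at hUmem
  obtain ⟨hUC, hUlt⟩ := hUmem
  obtain ⟨L, hLmem⟩ := Finset.nonempty_iff_ne_empty.2 hlg
  rw [Finset.mem_filter] at hLmem
  obtain ⟨hLC, hLgt⟩ := hLmem
  have hs1 := small_card_le_one hdt1 C hC hd2
  have hs2 := large_card_le_one hdt1 htv C hC hd2
  have hNval := Nval hv2 ht1 hN
  have hqt : 2 ≤ Fintype.card F ^ t := Nat.one_lt_pow (by omega) hq
  set Ct := C.filter (fun X : Submodule F (Fin v → F) => finrank F ↥X = t) with hCtdef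
  by_cases hct : Ct = ∅
  · rw [hct]
    simp only [Finset.card_empty, add_zero]
    omega
  obtain ⟨W₀, hW₀mem⟩ := Finset.nonempty_iff_ne_empty.2 hct
  rw [hCtdef, Finset.mem_filter] at hW₀mem
  obtain ⟨hW₀C, hW₀t⟩ := hW₀mem
  -- facts about U
  have hUW : ∀ W ∈ C, finrank F ↥W = t → U ⊓ W = ⊥ ∧ finrank F ↥U + 1 = t := by
    intro W hW hWt
    have hne : U ≠ W := by intro h; rw [h, hWt] at hUlt; omega
    have h1 := supinf U W
    have h2 := hC U hUC W hW hne
    rw [dist_def] at h2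
    refine ⟨(Submodule.finrank_eq_zero).1 (by omega), by omega⟩
  have hUdim : finrank F ↥U + 1 = t := (hUW W₀ hW₀C hW₀t).2
  have ht2 : 2 ≤ t := by
    have h1 := supinf U W₀
    have h2 := hC U hUC W₀ hW₀C (by intro h; rw [h, hW₀t] at hUlt; omega)
    rw [dist_def] at h2
    omega
  -- facts about L
  have hLd : finrank F ↥L = t + 1 := by
    have hne : L ≠ W₀ := by intro h; rw [h, hW₀t] at hLgt; omega
    have h1 := supinf L W₀
    have h2 := hC L hLC W₀ hW₀C hne
    rw [dist_def] at h2
    have h5 := suple L W₀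
    have h6 := rank_le L
    omega
  have hLU : L ⊓ U = ⊥ := by
    have hne : L ≠ U := by intro h; rw [h] at hLd; omega
    have h1 := supinf L U
    have h2 := hC L hLC U hUC hne
    rw [dist_def] at h2
    exact (Submodule.finrank_eq_zero).1 (by omega)
  have hLW : ∀ W ∈ C, finrank F ↥W = t → finrank F ↥(L ⊓ W) ≤ 1 := by
    intro W hW hWt
    have hne : L ≠ W := by intro h; rw [h, hWt] at hLd; omega
    have h1 := supinf L W
    have h2 := hC L hLC W hW hne
    rw [dist_def] at h2
    have h5 := suple L W
    omega
  have hWW : ∀ X ∈ Ct, ∀ Y ∈ Ct, X ≠ Y → X ⊓ Y = ⊥ := by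
    intro X hX Y hY hne
    rw [hCtdef, Finset.mem_filter] at hX hY
    have h1 := supinf X Y
    have h2 := hC X hX.1 Y hY.1 hne
    rw [dist_def] at h2
    have := hX.2; have := hY.2
    exact (Submodule.finrank_eq_zero).1 (by omega)
  -- counting sets
  have hBcard : (Ct.biUnion nzf).card = Ct.card * (Fintype.card F ^ t - 1) := by
    rw [Finset.card_biUnion (fun X hX Y hY hne => nzf_disj (hWW X hX Y hY hne))]
    rw [show (∑ W ∈ Ct, (nzf W).card) = ∑ _W ∈ Ct, (Fintype.card F ^ t - 1) from
      Finset.sum_congr rfl (fun W hW => by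
        rw [card_nzf, (Finset.mem_filter.1 hW).2])]
    rw [Finset.sum_const, smul_eq_mul]
  set B := Ct.biUnion nzf with hBdef
  set Z := nzf L \ B with hZdef
  have hZL : Z ⊆ nzf L := Finset.sdiff_subset
  have hAB : Disjoint (nzf U) B := by
    rw [Finset.disjoint_left]
    intro a haU haB
    obtain ⟨W, hW, haW⟩ := Finset.mem_biUnion.1 haB
    have h := (hUW W (Finset.mem_filter.1 hW).1 (Finset.mem_filter.1 hW).2).1
    have hmem : a ∈ U ⊓ W := ⟨(mem_nzf.1 haU).1, (mem_nzf.1 haW).1⟩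
    rw [h, Submodule.mem_bot] at hmem
    exact (mem_nzf.1 haU).2 hmem
  have hAZ : Disjoint (nzf U) Z := by
    rw [Finset.disjoint_left]
    intro a haU haZ
    have haL := hZL haZ
    have hmem : a ∈ L ⊓ U := ⟨(mem_nzf.1 haL).1, (mem_nzf.1 haU).1⟩
    rw [hLU, Submodule.mem_bot] at hmem
    exact (mem_nzf.1 haU).2 hmem
  have hZB : Disjoint Z B := Finset.sdiff_disjoint
  have hsub : nzf U ∪ (Z ∪ B) ⊆ (Finset.univ : Finset (Fin v → F)).erase 0 := by
    intro a ha
    rcases Finset.mem_union.1 ha with h | h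
    · exact Finset.mem_erase.2 ⟨(mem_nzf.1 h).2, Finset.mem_univ a⟩
    rcases Finset.mem_union.1 h with h | h
    · exact Finset.mem_erase.2 ⟨(mem_nzf.1 (hZL h)).2, Finset.mem_univ a⟩
    · obtain ⟨W, hW, haW⟩ := Finset.mem_biUnion.1 h
      exact Finset.mem_erase.2 ⟨(mem_nzf.1 haW).2, Finset.mem_univ a⟩
  have htotal : (nzf U).card + (Z.card + B.card) ≤ Fintype.card F ^ v - 1 := by
    have h1 := Finset.card_le_card hsub
    rw [Finset.card_union_of_disjoint (Finset.disjoint_union_right.2 ⟨hAZ, hAB⟩),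
      Finset.card_union_of_disjoint hZB,
      Finset.card_erase_of_mem (Finset.mem_univ _), Finset.card_univ, card_univ_fun] at h1
    exact h1
  have hLcov : nzf L ⊆ Z ∪ Ct.biUnion (fun W => nzf L ∩ nzf W) := by
    intro a ha
    by_cases hB : a ∈ B
    · obtain ⟨W, hW, haW⟩ := Finset.mem_biUnion.1 hB
      exact Finset.mem_union.2 (Or.inr
        (Finset.mem_biUnion.2 ⟨W, hW, Finset.mem_inter.2 ⟨ha, haW⟩⟩))
    · exact Finset.mem_union.2 (Or.inl (Finset.mem_sdiff.2 ⟨ha, hB⟩))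
  have hLbound : Fintype.card F ^ (t + 1) - 1 ≤ Z.card + Ct.card * (Fintype.card F - 1) := by
    have h1 : (nzf L).card = Fintype.card F ^ (t + 1) - 1 := by rw [card_nzf, hLd]
    have h2 := Finset.card_le_card hLcov
    have h3 := Finset.card_union_le Z (Ct.biUnion (fun W => nzf L ∩ nzf W))
    have h4 := Finset.card_biUnion_le (s := Ct) (t := fun W => nzf L ∩ nzf W)
    have h5 : ∑ W ∈ Ct, (nzf L ∩ nzf W).card ≤ ∑ _W ∈ Ct, (Fintype.card F - 1) := by
      apply Finset.sum_le_sum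
      intro W hW
      rw [nzf_inf, card_nzf]
      have h6 := hLW W (Finset.mem_filter.1 hW).1 (Finset.mem_filter.1 hW).2
      have h7 : Fintype.card F ^ finrank F ↥(L ⊓ W) ≤ Fintype.card F ^ 1 :=
        Nat.pow_le_pow_right (by omega) h6
      rw [pow_one] at h7
      omega
    rw [Finset.sum_const, smul_eq_mul] at h5
    omega
  -- final arithmetic
  have hUrk : finrank F ↥U = t - 1 := by omega
  have hcardU : (nzf U).card = Fintype.card F ^ (t - 1) - 1 := by rw [card_nzf, hUrk]
  have hplow : 2 ≤ Fintype.card F ^ (t - 1) := Nat.one_lt_pow (by omega) hq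
  have hcN : Ct.card + 2 ≤ N := by
    by_contra hcon
    have hcge : Fintype.card F ^ t ≤ Ct.card := by omega
    have p1 : Fintype.card F ^ v = Fintype.card F ^ t * Fintype.card F ^ t := by
      rw [hv2, two_mul, pow_add]
    have p2 : Fintype.card F ^ (t + 1) = Fintype.card F * Fintype.card F ^ t := by
      rw [pow_succ, mul_comm]
    rw [hcardU, hBcard, p1] at htotal
    rw [p2] at hLbound
    have h1t : 1 ≤ Fintype.card F ^ t := by omega
    have h1tm : 1 ≤ Fintype.card F ^ (t - 1) := by omega
    have h1qq : 1 ≤ Fintype.card F ^ t * Fintype.card F ^ t :=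
      Nat.mul_pos h1t h1t
    have h1q : 1 ≤ Fintype.card F := by omega
    have h1t1 : 1 ≤ Fintype.card F * Fintype.card F ^ t := Nat.mul_pos h1q h1t
    have hqT : Fintype.card F ≤ Fintype.card F ^ t := by
      have := Nat.pow_le_pow_right (show 1 ≤ Fintype.card F by omega) (show 1 ≤ t by omega)
      rwa [pow_one] at this
    zify [h1t, h1tm, h1qq, h1t1, h1q] at htotal hLbound hcge hqT
    have hplow' : (2 : ℤ) ≤ (Fintype.card F : ℤ) ^ (t - 1) := by exact_mod_cast hplow
    set A := (Ct.card : ℤ) with hAdef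
    set Q := ((Fintype.card F : ℤ) ^ t) with hQdef
    set qz := (Fintype.card F : ℤ) with hqzdef
    set Zc := (Z.card : ℤ) with hZcdef
    have step1 : A * (Q - 1) = A * (qz - 1) + A * (Q - qz) := by ring
    have step2 : Q * (Q - qz) ≤ A * (Q - qz) :=
      mul_le_mul_of_nonneg_right hcge (by linarith)
    have step3 : (Fintype.card F : ℤ) ^ (t - 1) - 1 + (qz * Q - 1) + A * (Q - qz)
        ≤ Q * Q - 1 := by linarith
    have step5 : Q * (Q - qz) = Q * Q - qz * Q := by ring
    linarith
  omega

end Main3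

end SJ

open Module Submodule

/-- If ⌈d/2⌉ divides v, then A_q(v,d) ≤ Σ_{i=⌈d/2⌉}^{v-⌈d/2⌉} A_q(v, 2⌈d/2⌉; i). -/
theorem johnson_mixed_spread_bound (q v d : ℕ) (F : Type*) [Field F] [Fintype F]
    (hF : Fintype.card F = q) (hv : 1 ≤ v) (hd : 2 ≤ d) (hdv : d ≤ v)
    (hdvd : (d + 1) / 2 ∣ v) :
    maxCode F v d ≤ ∑ i ∈ Finset.Icc ((d + 1) / 2) (v - (d + 1) / 2),
      maxCodeDim F v (2 * ((d + 1) / 2)) i := by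
  classical
  set t := (d + 1) / 2 with htdef
  have hdt1 : 2 * t ≤ d + 1 := by omega
  have hdt2 : d ≤ 2 * t := by omega
  have ht1 : 1 ≤ t := by omega
  obtain ⟨s, hs⟩ := hdvd
  have hts : 2 ≤ s := by
    by_contra h
    push_neg at h
    interval_cases s
    · rw [mul_zero] at hs; omega
    · rw [mul_one] at hs; omega
  have htv : 2 * t ≤ v := by
    have h2 := Nat.mul_le_mul_left t hts
    omega
  obtain ⟨D, hDcode, hDdim, hDcount⟩ := SJ.exists_spread F v t s ht1 hs
  have hNA : D.card ≤ maxCodeDim F v (2 * t) t := SJ.le_maxCodeDim D hDcode hDdim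
  have hNA' : D.card ≤ maxCodeDim F v (2 * t) (v - t) := by
    have himg := SJ.le_maxCodeDim (k := v - t) (D.image (SJ.sig v F)) (SJ.sig_code D hDcode)
      (fun X hX => by
        obtain ⟨X₀, hX₀, rfl⟩ := Finset.mem_image.1 hX
        have h1 := SJ.sig_rank (F := F) X₀
        have h2 := hDdim X₀ hX₀
        omega)
    rwa [Finset.card_image_of_injective _ SJ.sig_inj] at himg
  apply SJ.maxCode_le
  intro C hC
  have key1 := Finset.card_filter_add_card_filter_not
    (s := C) (p := fun X : Submodule F (Fin v → F) => finrank F ↥X < t)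
  set Q1 := C.filter (fun X : Submodule F (Fin v → F) => ¬ finrank F ↥X < t) with hQ1def
  have key2 := Finset.card_filter_add_card_filter_not
    (s := Q1) (p := fun X : Submodule F (Fin v → F) => v - t < finrank F ↥X)
  have e3 : Q1.filter (fun X : Submodule F (Fin v → F) => v - t < finrank F ↥X)
      = C.filter (fun X : Submodule F (Fin v → F) => v - t < finrank F ↥X) := by
    rw [hQ1def, Finset.filter_filter]
    ext X
    simp only [Finset.mem_filter]
    exact ⟨fun h => ⟨h.1, h.2.2⟩, fun h => ⟨h.1, by have := h.2; omega, h.2⟩⟩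
  have e4 : Q1.filter (fun X : Submodule F (Fin v → F) => ¬ v - t < finrank F ↥X)
      = C.filter (fun X : Submodule F (Fin v → F) =>
          t ≤ finrank F ↥X ∧ finrank F ↥X ≤ v - t) := by
    rw [hQ1def, Finset.filter_filter]
    ext X
    simp only [Finset.mem_filter]
    exact ⟨fun h => ⟨h.1, by omega, by omega⟩, fun h => ⟨h.1, by omega, by omega⟩⟩
  set Cmid := C.filter (fun X : Submodule F (Fin v → F) =>
    t ≤ finrank F ↥X ∧ finrank F ↥X ≤ v - t) with hCmiddef
  have hfib : Cmid.card = ∑ i ∈ Finset.Icc t (v - t),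
      (Cmid.filter (fun X : Submodule F (Fin v → F) => finrank F ↥X = i)).card :=
    Finset.card_eq_sum_card_fiberwise (fun X hX => by
      rw [Finset.mem_coe, hCmiddef, Finset.mem_filter] at hX
      exact Finset.mem_coe.2 (Finset.mem_Icc.2 ⟨hX.2.1, hX.2.2⟩))
  have e5 : ∀ i, t ≤ i → i ≤ v - t →
      Cmid.filter (fun X : Submodule F (Fin v → F) => finrank F ↥X = i)
        = C.filter (fun X : Submodule F (Fin v → F) => finrank F ↥X = i) := by
    intro i hi1 hi2
    rw [hCmiddef, Finset.filter_filter]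
    ext X
    simp only [Finset.mem_filter]
    exact ⟨fun h => ⟨h.1, h.2.2⟩, fun h => ⟨h.1, ⟨by omega, by omega⟩, h.2⟩⟩
  by_cases hv2 : v = 2 * t
  · have hvt : v - t = t := by omega
    rw [hvt, Finset.Icc_self, Finset.sum_singleton]
    have hbs := SJ.both_side hd hdt1 hdt2 hv2 ht1 C hC hDcount hNA hNA'
    have hmid : Cmid = C.filter (fun X : Submodule F (Fin v → F) => finrank F ↥X = t) := by
      rw [hCmiddef]
      ext X
      simp only [Finset.mem_filter]
      exact ⟨fun h => ⟨h.1, by omega⟩, fun h => ⟨h.1, by omega, by omega⟩⟩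
    rw [e3, e4, hmid] at key2
    omega
  · have hlt : 2 * t < v := by omega
    have hI1 : Finset.Icc t (v - t) = insert t (Finset.Icc (t + 1) (v - t)) := by
      ext i
      simp only [Finset.mem_Icc, Finset.mem_insert]
      omega
    have hI2 : Finset.Icc (t + 1) (v - t) = insert (v - t) (Finset.Icc (t + 1) (v - t - 1)) := by
      ext i
      simp only [Finset.mem_Icc, Finset.mem_insert]
      omega
    have hnmem1 : t ∉ Finset.Icc (t + 1) (v - t) := by
      simp only [Finset.mem_Icc]; omega
    have hnmem2 : v - t ∉ Finset.Icc (t + 1) (v - t - 1) := by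
      simp only [Finset.mem_Icc]; omega
    rw [hI1, Finset.sum_insert hnmem1, hI2, Finset.sum_insert hnmem2]
    rw [hI1, Finset.sum_insert hnmem1, hI2, Finset.sum_insert hnmem2] at hfib
    rw [e5 t le_rfl (by omega), e5 (v - t) (by omega) le_rfl] at hfib
    have hsmall := SJ.small_side hd hdt1 hdt2 htv C hC hDcount hNA
    have hlarge := SJ.large_side hd hdt1 hdt2 htv ht1 C hC hDcount hNA'
    have hmid : ∑ i ∈ Finset.Icc (t + 1) (v - t - 1),
        (Cmid.filter (fun X : Submodule F (Fin v → F) => finrank F ↥X = i)).card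
        ≤ ∑ i ∈ Finset.Icc (t + 1) (v - t - 1), maxCodeDim F v (2 * t) i := by
      apply Finset.sum_le_sum
      intro i hi
      rw [Finset.mem_Icc] at hi
      rw [e5 i (by omega) (by omega)]
      exact SJ.fiber_le hdt1 C hC i
    rw [e3, e4] at key2
    omega
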